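/- Define u₀*(t) = 1, u₁*(t) = U(t), and u_{k+1}*(t) = ∫₀ᵗ u(t−s) u_k*(s) ds for k ≥ 1, where u : (0,∞) → ℝ is nonnegative with u(t) ≤ C₂ t^{β−1} on (0,T] and U(t) = ∫₀ᵗ u(s)ds ≤ C₁ t^β on [0,T], β ∈ (0,1). Then for every k ≥ 1 and t ∈ [0,T]: u_k*(t) ≤ C₁ C₂^{k−1} (β / Γ(kβ + 1)) (Γ(β) t^β)^k. -/

import Mathlib

open Set MeasureTheory

lemma realBeta (a b : ℝ) (ha : 0 < a) (hb : 0 < b) :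
    ∫ x in (0:ℝ)..1, x ^ (a - 1) * (1 - x) ^ (b - 1) =
      Real.Gamma a * Real.Gamma b / Real.Gamma (a + b) := by
  have hab : (0:ℝ) < Real.Gamma (a + b) := Real.Gamma_pos_of_pos (by linarith)
  have hbeta : Complex.betaIntegral a b =
      ((∫ x in (0:ℝ)..1, x ^ (a - 1) * (1 - x) ^ (b - 1) : ℝ) : ℂ) := by
    rw [Complex.betaIntegral, ← intervalIntegral.integral_ofReal]
    apply intervalIntegral.integral_congr
    intro x hx
    rw [uIcc_of_le zero_le_one] at hx
    push_cast
    rw [Complex.ofReal_cpow hx.1, Complex.ofReal_cpow (by linarith [hx.2] : (0:ℝ) ≤ 1 - x)]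
    push_cast
    ring
  have h := Complex.Gamma_mul_Gamma_eq_betaIntegral
    (s := (a:ℂ)) (t := (b:ℂ)) (by simpa using ha) (by simpa using hb)
  rw [hbeta, show (a:ℂ) + (b:ℂ) = ((a + b : ℝ) : ℂ) by push_cast; ring,
    Complex.Gamma_ofReal, Complex.Gamma_ofReal, Complex.Gamma_ofReal,
    ← Complex.ofReal_mul, ← Complex.ofReal_mul, Complex.ofReal_inj] at h
  field_simp
  linarith [h]

lemma realBeta_integrable (a b : ℝ) (ha : 0 < a) (hb : 0 < b) :
    IntervalIntegrable (fun x : ℝ => x ^ (a - 1) * (1 - x) ^ (b - 1)) volume 0 1 := by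
  have h := Complex.betaIntegral_convergent (u := (a:ℂ)) (v := (b:ℂ))
    (by simpa using ha) (by simpa using hb)
  have h2 : IntervalIntegrable
      (fun x : ℝ => ((x:ℂ) ^ ((a:ℂ) - 1) * (1 - (x:ℂ)) ^ ((b:ℂ) - 1)).re) volume 0 1 :=
    ⟨h.1.re, h.2.re⟩
  apply h2.congr
  rw [uIoc_of_le (zero_le_one' ℝ)]
  intro x hx; dsimp only
  rw [show ((a:ℂ) - 1) = ((a - 1 : ℝ) : ℂ) by push_cast; ring,
    show ((b:ℂ) - 1) = ((b - 1 : ℝ) : ℂ) by push_cast; ring,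
    show (1 - (x:ℂ)) = ((1 - x : ℝ) : ℂ) by push_cast; ring,
    ← Complex.ofReal_cpow hx.1.le, ← Complex.ofReal_cpow (by linarith [hx.2] : (0:ℝ) ≤ 1 - x),
    ← Complex.ofReal_mul]
  simp

lemma convBeta_integrable (a b t : ℝ) (ha : 0 < a) (hb : 0 < b) (ht : 0 < t) :
    IntervalIntegrable (fun s : ℝ => (t - s) ^ (a - 1) * s ^ (b - 1)) volume 0 t := by
  have h1 := (realBeta_integrable b a hb ha).comp_mul_left (c := t⁻¹)
  rw [zero_div, one_div, inv_inv] at h1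
  have h2 := (h1.const_mul (t ^ (b - 1) * t ^ (a - 1)))
  apply h2.congr
  rw [uIoc_of_le ht.le]
  intro s hs; dsimp only
  have hst : 0 ≤ s / t := div_nonneg hs.1.le ht.le
  have hst1 : s / t ≤ 1 := (div_le_one ht).2 hs.2
  have e1 : t ^ (b - 1) * (t⁻¹ * s) ^ (b - 1) = s ^ (b - 1) := by
    rw [← Real.mul_rpow ht.le (mul_nonneg (inv_nonneg.2 ht.le) hs.1.le)]
    congr 1; field_simp
  have e2 : t ^ (a - 1) * (1 - t⁻¹ * s) ^ (a - 1) = (t - s) ^ (a - 1) := by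
    rw [← Real.mul_rpow ht.le (by rw [inv_mul_eq_div]; linarith)]
    congr 1; field_simp
  calc t ^ (b - 1) * t ^ (a - 1) * ((t⁻¹ * s) ^ (b - 1) * (1 - t⁻¹ * s) ^ (a - 1))
      = (t ^ (b - 1) * (t⁻¹ * s) ^ (b - 1)) * (t ^ (a - 1) * (1 - t⁻¹ * s) ^ (a - 1)) := by ring
    _ = s ^ (b - 1) * (t - s) ^ (a - 1) := by rw [e1, e2]
    _ = (t - s) ^ (a - 1) * s ^ (b - 1) := by ring

lemma convBeta (a b t : ℝ) (ha : 0 < a) (hb : 0 < b) (ht : 0 < t) :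
    ∫ s in (0:ℝ)..t, (t - s) ^ (a - 1) * s ^ (b - 1) =
      Real.Gamma a * Real.Gamma b / Real.Gamma (a + b) * t ^ (a + b - 1) := by
  have key : (t • ∫ x in (0:ℝ)..1, (fun s : ℝ => (t - s) ^ (a - 1) * s ^ (b - 1)) (t * x))
      = ∫ s in (0:ℝ)..t, (t - s) ^ (a - 1) * s ^ (b - 1) := by
    have := intervalIntegral.smul_integral_comp_mul_left
      (fun s : ℝ => (t - s) ^ (a - 1) * s ^ (b - 1)) t (a := 0) (b := 1)
    simpa using this
  rw [← key]
  have e : ∀ x ∈ uIcc (0:ℝ) 1,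
      (t - t * x) ^ (a - 1) * (t * x) ^ (b - 1)
        = (t ^ (a - 1) * t ^ (b - 1)) * (x ^ (b - 1) * (1 - x) ^ (a - 1)) := by
    intro x hx
    rw [uIcc_of_le zero_le_one] at hx
    have e1 : (t * x) ^ (b - 1) = t ^ (b - 1) * x ^ (b - 1) :=
      Real.mul_rpow ht.le hx.1
    have e2 : (t - t * x) ^ (a - 1) = t ^ (a - 1) * (1 - x) ^ (a - 1) := by
      rw [show t - t * x = t * (1 - x) by ring, Real.mul_rpow ht.le (by linarith [hx.2])]
    rw [e1, e2]; ring
  rw [intervalIntegral.integral_congr e, intervalIntegral.integral_const_mul,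
    realBeta b a hb ha]
  rw [smul_eq_mul, show Real.Gamma b * Real.Gamma a / Real.Gamma (b + a)
    = Real.Gamma a * Real.Gamma b / Real.Gamma (a + b) by rw [add_comm, mul_comm]]
  rw [show t * (t ^ (a - 1) * t ^ (b - 1) * (Real.Gamma a * Real.Gamma b / Real.Gamma (a + b)))
    = (Real.Gamma a * Real.Gamma b / Real.Gamma (a + b)) * (t ^ (1:ℝ) * (t ^ (a - 1) * t ^ (b - 1))) by rw [Real.rpow_one]; ring]
  rw [← Real.rpow_add ht, ← Real.rpow_add ht]
  ring_nf

/-- The inductive estimate on the iterated convolution powers `u_k^*` of the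
potential density. -/
theorem stmt9 (u : ℝ → ℝ) (v : ℕ → ℝ → ℝ) (C₁ C₂ β T : ℝ)
    (hβ : β ∈ Set.Ioo (0:ℝ) 1) (hC₁ : 0 < C₁) (hC₂ : 0 < C₂) (hT : 0 < T)
    (humeas : Measurable u)
    (hu0 : ∀ t ∈ Set.Ioc (0:ℝ) T, 0 ≤ u t)
    (hub : ∀ t ∈ Set.Ioc (0:ℝ) T, u t ≤ C₂ * t ^ (β - 1))
    (hU : ∀ t ∈ Set.Icc (0:ℝ) T, (∫ s in (0:ℝ)..t, u s) ≤ C₁ * t ^ β)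
    (hv0 : ∀ t : ℝ, v 0 t = 1)
    (hvs : ∀ (k : ℕ) (t : ℝ), v (k + 1) t = ∫ s in (0:ℝ)..t, u (t - s) * v k s) :
    ∀ k ≥ 1, ∀ t ∈ Set.Icc (0:ℝ) T,
      v k t ≤ C₁ * C₂ ^ (k - 1) * (β / Real.Gamma ((k : ℝ) * β + 1)) *
        (Real.Gamma β * t ^ β) ^ k := by
  obtain ⟨hβ0, hβ1⟩ := hβ
  have hΓβ : 0 < Real.Gamma β := Real.Gamma_pos_of_pos hβ0
  have ae_ne : ∀ c : ℝ, ∀ᵐ s : ℝ ∂(volume : Measure ℝ), s ≠ c := by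
    intro c
    rw [ae_iff]
    convert (measure_singleton c : (volume : Measure ℝ) {c} = 0) using 2
    ext s; simp
  -- nonnegativity of the iterates on [0, T]
  have hnn : ∀ k, ∀ t ∈ Set.Icc (0:ℝ) T, 0 ≤ v k t := by
    intro k
    induction k with
    | zero => intro t _; rw [hv0]; norm_num
    | succ k ih =>
      intro t ht
      rw [hvs]
      apply intervalIntegral.integral_nonneg_of_ae_restrict ht.1
      filter_upwards [ae_restrict_mem measurableSet_Icc, ae_restrict_of_ae (ae_ne t)]
        with s hs hst
      have hslt : s < t := lt_of_le_of_ne hs.2 hst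
      exact mul_nonneg (hu0 _ ⟨by linarith, by linarith [ht.2, hs.1]⟩)
        (ih s ⟨hs.1, le_trans hs.2 ht.2⟩)
  have main : ∀ k : ℕ, ∀ t ∈ Set.Icc (0:ℝ) T,
      v (k + 1) t ≤ C₁ * C₂ ^ k * (β / Real.Gamma (((k + 1 : ℕ) : ℝ) * β + 1)) *
        (Real.Gamma β * t ^ β) ^ (k + 1) := by
    intro k
    induction k with
    | zero =>
      intro t ht
      have hUt : v 1 t ≤ C₁ * t ^ β := by
        rw [hvs 0 t]
        have e : (∫ s in (0:ℝ)..t, u (t - s) * v 0 s) = ∫ s in (0:ℝ)..t, u s := by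
          simp_rw [hv0, mul_one]
          simpa using intervalIntegral.integral_comp_sub_left u t
        rw [e]; exact hU t ht
      have eR : C₁ * C₂ ^ 0 * (β / Real.Gamma (((0 + 1 : ℕ) : ℝ) * β + 1)) *
          (Real.Gamma β * t ^ β) ^ (0 + 1) = C₁ * t ^ β := by
        push_cast
        rw [pow_zero, pow_one, one_mul, Real.Gamma_add_one hβ0.ne']
        field_simp
      rw [eR]; exact hUt
    | succ k ih =>
      intro t ht
      have hΓ1 : 0 < Real.Gamma (((k + 1 : ℕ) : ℝ) * β + 1) :=
        Real.Gamma_pos_of_pos (by positivity)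
      have hΓ2 : 0 < Real.Gamma (((k + 1 + 1 : ℕ) : ℝ) * β + 1) :=
        Real.Gamma_pos_of_pos (by positivity)
      have hRnn : 0 ≤ C₁ * C₂ ^ (k + 1) * (β / Real.Gamma (((k + 1 + 1 : ℕ) : ℝ) * β + 1)) *
          (Real.Gamma β * t ^ β) ^ (k + 1 + 1) := by
        have h1 : (0:ℝ) ≤ Real.Gamma β * t ^ β :=
          mul_nonneg hΓβ.le (Real.rpow_nonneg ht.1 β)
        have h2 : (0:ℝ) ≤ β / Real.Gamma (((k + 1 + 1 : ℕ) : ℝ) * β + 1) :=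
          div_nonneg hβ0.le hΓ2.le
        positivity
      rcases eq_or_lt_of_le ht.1 with h0 | h0
      · subst h0
        rw [hvs, intervalIntegral.integral_same]
        exact hRnn
      rw [hvs]
      by_cases hint : IntervalIntegrable (fun s => u (t - s) * v (k + 1) s) volume 0 t
      swap
      · rw [intervalIntegral.integral_undef hint]
        exact hRnn
      set b : ℝ := ((k + 1 : ℕ) : ℝ) * β + 1 with hb_def
      have hb : 0 < b := by positivity
      set Bk : ℝ := C₁ * C₂ ^ k * (β / Real.Gamma b) * Real.Gamma β ^ (k + 1) with hBk
      have hBknn : 0 ≤ Bk := by positivity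
      have hgint : IntervalIntegrable
          (fun s => C₂ * Bk * ((t - s) ^ (β - 1) * s ^ (b - 1))) volume 0 t :=
        (convBeta_integrable β b t hβ0 hb h0).const_mul _
      have hcomp : (fun s => u (t - s) * v (k + 1) s)
          ≤ᵐ[volume.restrict (Set.Icc 0 t)]
          fun s => C₂ * Bk * ((t - s) ^ (β - 1) * s ^ (b - 1)) := by
        filter_upwards [ae_restrict_mem measurableSet_Icc,
          ae_restrict_of_ae (ae_ne t), ae_restrict_of_ae (ae_ne 0)] with s hs hst hs0
        have hs1 : 0 < s := lt_of_le_of_ne hs.1 (Ne.symm hs0)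
        have hs2 : s < t := lt_of_le_of_ne hs.2 hst
        have hts : t - s ∈ Set.Ioc (0:ℝ) T := ⟨by linarith, by linarith [ht.2]⟩
        have h1 : u (t - s) ≤ C₂ * (t - s) ^ (β - 1) := hub _ hts
        have hsT : s ∈ Set.Icc (0:ℝ) T := ⟨hs1.le, le_trans hs2.le ht.2⟩
        have h2 : v (k + 1) s ≤ Bk * s ^ (b - 1) := by
          refine (ih s hsT).trans (le_of_eq ?_)
          rw [hBk, hb_def]
          rw [mul_pow, ← Real.rpow_natCast (s ^ β) (k + 1), ← Real.rpow_mul hs1.le]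
          push_cast
          rw [show (↑k + 1) * β + 1 - 1 = β * (↑k + 1) by ring]
          ring
        calc u (t - s) * v (k + 1) s
            ≤ (C₂ * (t - s) ^ (β - 1)) * v (k + 1) s :=
              mul_le_mul_of_nonneg_right h1 (hnn (k + 1) s hsT)
          _ ≤ (C₂ * (t - s) ^ (β - 1)) * (Bk * s ^ (b - 1)) := by
              apply mul_le_mul_of_nonneg_left h2
              exact mul_nonneg hC₂.le (Real.rpow_nonneg (by linarith) _)
          _ = C₂ * Bk * ((t - s) ^ (β - 1) * s ^ (b - 1)) := by ring
      calc (∫ s in (0:ℝ)..t, u (t - s) * v (k + 1) s)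
          ≤ ∫ s in (0:ℝ)..t, C₂ * Bk * ((t - s) ^ (β - 1) * s ^ (b - 1)) :=
            intervalIntegral.integral_mono_ae_restrict ht.1 hint hgint hcomp
        _ = C₂ * Bk * ∫ s in (0:ℝ)..t, (t - s) ^ (β - 1) * s ^ (b - 1) :=
            intervalIntegral.integral_const_mul _ _
        _ = C₂ * Bk * (Real.Gamma β * Real.Gamma b / Real.Gamma (β + b) * t ^ (β + b - 1)) := by
            rw [convBeta β b t hβ0 hb h0]
        _ = C₁ * C₂ ^ (k + 1) * (β / Real.Gamma (((k + 1 + 1 : ℕ) : ℝ) * β + 1)) *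
            (Real.Gamma β * t ^ β) ^ (k + 1 + 1) := by
            rw [hBk, hb_def]
            have e1 : β + (((k + 1 : ℕ) : ℝ) * β + 1) = ((k + 1 + 1 : ℕ) : ℝ) * β + 1 := by
              push_cast; ring
            have e2 : (Real.Gamma β * t ^ β) ^ (k + 1 + 1)
                = Real.Gamma β ^ (k + 1 + 1) * t ^ (β + (((k + 1 : ℕ) : ℝ) * β + 1) - 1) := by
              rw [mul_pow, ← Real.rpow_natCast (t ^ β) (k + 1 + 1), ← Real.rpow_mul ht.1]
              push_cast
              ring_nf
            rw [e1, e2]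
            have hΓb : Real.Gamma (((k + 1 : ℕ) : ℝ) * β + 1) ≠ 0 := ne_of_gt hΓ1
            field_simp
            ring_nf; push_cast; ring_nf
  intro k hk t ht
  obtain ⟨m, rfl⟩ := Nat.exists_eq_add_of_le hk
  have h := main m t ht
  rw [show 1 + m = m + 1 by omega]
  simpa using h
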